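/- arXiv:2104.11352 — 5 statements merged into one kernel-verified Lean document; each statement's English description precedes it below -/
import Mathlib

section
/- Let β_0 < β_1 < ⋯ < β_g be positive integers, e_0 = β_0, e_i = gcd(e_{i-1}, β_i), n_i = e_{i-1}/e_i (assume n_i > 1 for 1 ≤ i ≤ g and e_g = 1). Define v_0 = β_0, v_{i+1} = n_i v_i + β_{i+1} − β_i for 0 ≤ i < g (with n_0 = 1). Let α ∈ ℤ, let k = max{ i : e_i ∤ α } and assume 0 ≤ k ≤ g − 1. With G_j = {η ∈ ℂ : η^{e_j} = 1}, one has Σ_{i=1}^{g} ( Σ_{η ∈ G_{i-1} \ G_i} (1 − η^α) ) · β_i = e_k · v_{k+1}. In particular this sum is nonzero. -/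
open Polynomial Finset in
lemma sum_one_sub_zpow_nthRoots (m : ℕ) (hm : 0 < m) (α : ℤ) :
    ∑ η ∈ (Polynomial.nthRoots m (1 : ℂ)).toFinset, (1 - η ^ α)
      = (m : ℂ) - (if (m : ℤ) ∣ α then (m : ℂ) else 0) := by
  have hζ := Complex.isPrimitiveRoot_exp m hm.ne'
  set ζ : ℂ := Complex.exp (2 * Real.pi * Complex.I / m) with hζdef
  have hζ0 : ζ ≠ 0 := fun h => by
    simpa [h, zero_pow hm.ne'] using hζ.pow_eq_one
  have himg : (nthRoots m (1 : ℂ)).toFinset = (range m).image (ζ ^ ·) := by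
    ext x
    simp [hζ.nthRoots_eq (one_pow m), Multiset.mem_toFinset, Multiset.mem_map,
      Multiset.mem_range, mul_one, eq_comm]
  have hinj : ∀ t ∈ range m, ∀ s ∈ range m, ζ ^ t = ζ ^ s → t = s := by
    intro t ht s hs h
    exact hζ.pow_inj (mem_range.mp ht) (mem_range.mp hs) h
  rw [himg, Finset.sum_image hinj, Finset.sum_sub_distrib, Finset.sum_const,
    Finset.card_range, nsmul_eq_mul, mul_one]
  congr 1
  have hcomm : ∀ t : ℕ, ((ζ ^ t : ℂ)) ^ α = (ζ ^ α) ^ t := by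
    intro t
    rw [← zpow_natCast ζ t, ← zpow_mul, mul_comm, zpow_mul, zpow_natCast]
  split_ifs with hdvd
  · obtain ⟨c, rfl⟩ := hdvd
    have h1 : ζ ^ ((m : ℤ) * c) = 1 := by
      rw [zpow_mul, zpow_natCast, hζ.pow_eq_one, one_zpow]
    simp [hcomm, h1]
  · have hne : ζ ^ α ≠ 1 := fun h => hdvd ((hζ.zpow_eq_one_iff_dvd α).mp h)
    simp_rw [hcomm]
    rw [geom_sum_eq hne m]
    have : (ζ ^ α) ^ m = 1 := by
      rw [← zpow_natCast (ζ ^ α) m, ← zpow_mul, mul_comm, zpow_mul, zpow_natCast,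
        hζ.pow_eq_one, one_zpow]
    rw [this, sub_self, zero_div]

/-- The computation of `S` in Proposition 3.9 of the paper: with the characteristic
sequence `β 0 < β 1 < ⋯ < β g`, the gcd chain `e`, the quotients `n i = e (i-1) / e i`,
the semigroup generators `v`, and `k = max { i : e i ∤ α }`, one has
`∑_{i=1}^{g} (∑_{η ∈ G_{i-1} \ G_i} (1 - η^α)) β_i = e_k v_{k+1} ≠ 0`. -/
theorem sum_S_eq_ek_vk (g : ℕ) (hg : 0 < g) (β e n v : ℕ → ℕ)
    (hβpos : 0 < β 0)
    (hβmono : ∀ i < g, β i < β (i + 1))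
    (he0 : e 0 = β 0)
    (he : ∀ i, 1 ≤ i → i ≤ g → e i = Nat.gcd (e (i - 1)) (β i))
    (heg : e g = 1)
    (hn : ∀ i, 1 ≤ i → i ≤ g → n i = e (i - 1) / e i)
    (hn1 : ∀ i, 1 ≤ i → i ≤ g → 1 < n i)
    (hn0 : n 0 = 1)
    (hv0 : v 0 = β 0)
    (hv : ∀ i < g, v (i + 1) = n i * v i + (β (i + 1) - β i))
    (α : ℤ) (k : ℕ) (hk : k ≤ g - 1)
    (hknd : ¬ ((e k : ℤ) ∣ α))
    (hkmax : ∀ i, k < i → i ≤ g → (e i : ℤ) ∣ α) :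
    ∑ i ∈ Finset.Icc 1 g,
        (∑ η ∈ (Polynomial.nthRoots (e (i - 1)) (1 : ℂ)).toFinset \
              (Polynomial.nthRoots (e i) (1 : ℂ)).toFinset, (1 - η ^ α)) * (β i : ℂ) =
      (e k : ℂ) * (v (k + 1) : ℂ) ∧ (e k : ℂ) * (v (k + 1) : ℂ) ≠ 0 := by
  classical
  have hkg : k < g := lt_of_le_of_lt hk (Nat.sub_lt hg one_pos)
  -- positivity of e
  have hepos : ∀ j, j ≤ g → 0 < e j := by
    intro j
    induction j with
    | zero => intro _; rw [he0]; exact hβpos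
    | succ j ih =>
      intro hj
      rw [he (j + 1) (Nat.succ_le_succ (Nat.zero_le j)) hj]
      simp only [Nat.add_sub_cancel]
      exact Nat.gcd_pos_of_pos_left _ (ih (le_of_lt hj))
  -- divisibility chain
  have hdvd : ∀ j, 1 ≤ j → j ≤ g → e j ∣ e (j - 1) := by
    intro j h1 h2
    rw [he j h1 h2]
    exact Nat.gcd_dvd_left _ _
  have hmul : ∀ j, 1 ≤ j → j ≤ g → e (j - 1) = n j * e j := by
    intro j h1 h2
    rw [hn j h1 h2, Nat.div_mul_cancel (hdvd j h1 h2)]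
  have hchain : ∀ j, j ≤ g → ∀ i, i ≤ j → e j ∣ e i := by
    intro j
    induction j with
    | zero => intro _ i hi; interval_cases i; exact dvd_rfl
    | succ j ih =>
      intro hj i hi
      rcases Nat.eq_or_lt_of_le hi with h | h
      · rw [h]
      · have : e (j + 1) ∣ e j := by
          have := hdvd (j + 1) (Nat.succ_le_succ (Nat.zero_le j)) hj
          simpa using this
        exact this.trans (ih (le_of_lt hj) i (Nat.lt_succ_iff.mp h))
  have hnd : ∀ j, j ≤ k → ¬ ((e j : ℤ) ∣ α) := by
    intro j hj h
    exact hknd (dvd_trans (Int.natCast_dvd_natCast.mpr (hchain k (le_of_lt hkg) j hj)) h)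
  -- the value of c
  set c : ℕ → ℂ := fun j => if (e j : ℤ) ∣ α then 0 else (e j : ℂ) with hc
  have hcval : ∀ j, j ≤ g → c j = if j ≤ k then (e j : ℂ) else 0 := by
    intro j hj
    by_cases h : j ≤ k
    · simp [hc, hnd j h, h]
    · simp [hc, hkmax j (Nat.lt_of_not_le h) hj, h]
  -- inner sums
  have hG : ∀ j, j ≤ g →
      ∑ η ∈ (Polynomial.nthRoots (e j) (1 : ℂ)).toFinset, (1 - η ^ α) = c j := by
    intro j hj
    rw [sum_one_sub_zpow_nthRoots (e j) (hepos j hj) α]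
    by_cases h : (e j : ℤ) ∣ α <;> simp [hc, h]
  have hsub : ∀ i, 1 ≤ i → i ≤ g →
      (Polynomial.nthRoots (e i) (1 : ℂ)).toFinset ⊆
        (Polynomial.nthRoots (e (i - 1)) (1 : ℂ)).toFinset := by
    intro i h1 h2 x hx
    rw [Multiset.mem_toFinset, Polynomial.mem_nthRoots (hepos i h2)] at hx
    rw [Multiset.mem_toFinset,
      Polynomial.mem_nthRoots (hepos (i - 1) (le_trans (Nat.sub_le i 1) h2))]
    obtain ⟨t, ht⟩ := hdvd i h1 h2
    rw [ht, pow_mul, hx, one_pow]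
  have hinner : ∀ i ∈ Finset.Icc 1 g,
      (∑ η ∈ (Polynomial.nthRoots (e (i - 1)) (1 : ℂ)).toFinset \
            (Polynomial.nthRoots (e i) (1 : ℂ)).toFinset, (1 - η ^ α)) * (β i : ℂ)
        = (c (i - 1) - c i) * (β i : ℂ) := by
    intro i hi
    rw [Finset.mem_Icc] at hi
    rw [Finset.sum_sdiff_eq_sub (hsub i hi.1 hi.2),
      hG (i - 1) (le_trans (Nat.sub_le i 1) hi.2), hG i hi.2]
  rw [Finset.sum_congr rfl hinner]
  -- reduce the sum
  have hsplit : Finset.Icc 1 g = Finset.Icc 1 (k + 1) ∪ Finset.Icc (k + 2) g := by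
    ext x
    simp only [Finset.mem_Icc, Finset.mem_union]
    omega
  have hdisj : Disjoint (Finset.Icc 1 (k + 1)) (Finset.Icc (k + 2) g) := by
    rw [Finset.disjoint_left]
    intro x hx hx'
    rw [Finset.mem_Icc] at hx hx'
    omega
  have hS : ∑ i ∈ Finset.Icc 1 g, (c (i - 1) - c i) * (β i : ℂ)
      = (∑ i ∈ Finset.Icc 1 k, ((e (i - 1) : ℂ) - (e i : ℂ)) * (β i : ℂ))
        + (e k : ℂ) * (β (k + 1) : ℂ) := by
    rw [hsplit, Finset.sum_union hdisj]
    have h2 : ∑ i ∈ Finset.Icc (k + 2) g, (c (i - 1) - c i) * (β i : ℂ) = 0 := by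
      apply Finset.sum_eq_zero
      intro i hi
      rw [Finset.mem_Icc] at hi
      rw [hcval (i - 1) (le_trans (Nat.sub_le i 1) hi.2), hcval i hi.2]
      have h1 : ¬ (i - 1 ≤ k) := by omega
      have h2 : ¬ (i ≤ k) := by omega
      simp [h1, h2]
    rw [h2, add_zero]
    rw [Finset.sum_Icc_succ_top (Nat.succ_le_succ (Nat.zero_le k))]
    simp only [Nat.add_sub_cancel]
    rw [hcval k (le_of_lt hkg), hcval (k + 1) hkg, if_pos le_rfl,
      if_neg (by omega), sub_zero]
    congr 1
    apply Finset.sum_congr rfl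
    intro i hi
    rw [Finset.mem_Icc] at hi
    rw [hcval (i - 1) (by omega), hcval i (by omega), if_pos (by omega),
      if_pos hi.2]
  rw [hS]
  -- the key identity by induction
  have key : ∀ m, m < g → (e m : ℂ) * (v (m + 1) : ℂ)
      = (∑ i ∈ Finset.Icc 1 m, ((e (i - 1) : ℂ) - (e i : ℂ)) * (β i : ℂ))
        + (e m : ℂ) * (β (m + 1) : ℂ) := by
    intro m
    induction m with
    | zero =>
      intro h0
      have : v 1 = β 1 := by
        rw [hv 0 h0, hn0, one_mul, hv0, Nat.add_sub_cancel' (le_of_lt (hβmono 0 h0))]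
      simp [this]
    | succ m ih =>
      intro hm
      have hmg : m < g := lt_trans (Nat.lt_succ_self m) hm
      have hvs : v (m + 2) = n (m + 1) * v (m + 1) + (β (m + 2) - β (m + 1)) :=
        hv (m + 1) hm
      have hβle : β (m + 1) ≤ β (m + 2) := le_of_lt (hβmono (m + 1) hm)
      have hcast : ((β (m + 2) - β (m + 1) : ℕ) : ℂ) = (β (m + 2) : ℂ) - (β (m + 1) : ℂ) :=
        Nat.cast_sub hβle
      have hemul : (e m : ℂ) = (n (m + 1) : ℂ) * (e (m + 1) : ℂ) := by
        have := hmul (m + 1) (Nat.succ_le_succ (Nat.zero_le m)) hm.le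
        simp only [Nat.add_sub_cancel] at this
        exact_mod_cast this
      have step : (e (m + 1) : ℂ) * (v (m + 2) : ℂ)
          = (e m : ℂ) * (v (m + 1) : ℂ)
            + (e (m + 1) : ℂ) * ((β (m + 2) : ℂ) - (β (m + 1) : ℂ)) := by
        rw [hvs]
        push_cast [hcast]
        rw [hemul]
        ring
      rw [step, ih hmg]
      rw [Finset.sum_Icc_succ_top (Nat.succ_le_succ (Nat.zero_le m))]
      simp only [Nat.add_sub_cancel]
      ring
  rw [← key k hkg]
  refine ⟨rfl, ?_⟩
  have hek : e k ≠ 0 := (hepos k (le_of_lt hkg)).ne'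
  have hvk : v (k + 1) ≠ 0 := by
    rw [hv k hkg]
    have : 0 < β (k + 1) - β k := Nat.sub_pos_of_lt (hβmono k hkg)
    omega
  exact mul_ne_zero (Nat.cast_ne_zero.mpr hek) (Nat.cast_ne_zero.mpr hvk)
end

section
/- Let v_0, …, v_g be positive integers with e_i = gcd(v_0, …, v_i), e_g = 1, n_i = e_{i-1}/e_i > 1, v_{i+1} > n_i v_i and n_i v_i ∈ ⟨v_0, …, v_{i-1}⟩ for all i. Then every integer r can be written uniquely as r = s_0 v_0 + Σ_{i=1}^{g} s_i v_i with s_0 ∈ ℤ and 0 ≤ s_i < n_i for 1 ≤ i ≤ g; moreover r belongs to the numerical semigroup Γ = ⟨v_0, …, v_g⟩ if and only if s_0 ≥ 0. -/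
/-- `r` is a nonnegative integer combination of `v 0, …, v m`. -/
def InGamma (g : ℕ) (v : ℕ → ℕ) (r : ℤ) : Prop :=
  ∃ c : ℕ → ℕ, r = ∑ i ∈ Finset.range (g + 1), (c i : ℤ) * (v i : ℤ)

namespace StdRepAux

lemma inGamma_add {m : ℕ} {v : ℕ → ℕ} {r₁ r₂ : ℤ}
    (h1 : InGamma m v r₁) (h2 : InGamma m v r₂) : InGamma m v (r₁ + r₂) := by
  obtain ⟨c, hc⟩ := h1; obtain ⟨d, hd⟩ := h2
  refine ⟨fun i => c i + d i, ?_⟩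
  rw [hc, hd, ← Finset.sum_add_distrib]
  exact Finset.sum_congr rfl fun i _ => by push_cast; ring

lemma inGamma_nsmul {m : ℕ} {v : ℕ → ℕ} {r : ℤ} (q : ℕ) (h : InGamma m v r) :
    InGamma m v ((q : ℤ) * r) := by
  obtain ⟨c, hc⟩ := h
  refine ⟨fun i => q * c i, ?_⟩
  rw [hc, Finset.mul_sum]
  exact Finset.sum_congr rfl fun i _ => by push_cast; ring

variable {g : ℕ} {v e n : ℕ → ℕ}

lemma epos (hvpos : ∀ i ≤ g, 0 < v i) (he0 : e 0 = v 0)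
    (he : ∀ i, 1 ≤ i → i ≤ g → e i = Nat.gcd (e (i - 1)) (v i)) :
    ∀ i ≤ g, 0 < e i := by
  intro i hi
  cases i with
  | zero => rw [he0]; exact hvpos 0 (Nat.zero_le _)
  | succ k =>
      rw [he (k + 1) (Nat.succ_le_succ (Nat.zero_le _)) hi]
      exact Nat.gcd_pos_of_pos_right _ (hvpos (k + 1) hi)

lemma e_dvd_e (he : ∀ i, 1 ≤ i → i ≤ g → e i = Nat.gcd (e (i - 1)) (v i)) :
    ∀ i ≤ g, ∀ j ≤ i, e i ∣ e j := by
  intro i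
  induction i with
  | zero =>
      intro _ j hj
      have : j = 0 := Nat.le_zero.mp hj
      subst this; exact dvd_rfl
  | succ k ih =>
      intro hk j hj
      rcases Nat.eq_or_lt_of_le hj with h | h
      · subst h; exact dvd_rfl
      · have h1 : e (k + 1) ∣ e k := by
          have hek : e (k + 1) = Nat.gcd (e ((k + 1) - 1)) (v (k + 1)) :=
            he (k + 1) (Nat.succ_le_succ (Nat.zero_le _)) hk
          rw [hek]; exact Nat.gcd_dvd_left _ _
        exact h1.trans (ih (by omega) j (by omega))

lemma e_dvd_v (he0 : e 0 = v 0)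
    (he : ∀ i, 1 ≤ i → i ≤ g → e i = Nat.gcd (e (i - 1)) (v i)) :
    ∀ i ≤ g, ∀ j ≤ i, e i ∣ v j := by
  intro i hi j hj
  have h1 : e i ∣ e j := e_dvd_e he i hi j hj
  refine h1.trans ?_
  cases j with
  | zero => rw [he0]
  | succ k =>
      have hek : e (k + 1) = Nat.gcd (e ((k + 1) - 1)) (v (k + 1)) :=
        he (k + 1) (Nat.succ_le_succ (Nat.zero_le _)) (le_trans hj hi)
      exact hek ▸ Nat.gcd_dvd_right _ _

lemma step_facts (hvpos : ∀ i ≤ g, 0 < v i) (he0 : e 0 = v 0)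
    (he : ∀ i, 1 ≤ i → i ≤ g → e i = Nat.gcd (e (i - 1)) (v i))
    (hn : ∀ i, 1 ≤ i → i ≤ g → n i = e (i - 1) / e i)
    (i : ℕ) (h1 : 1 ≤ i) (hg : i ≤ g) :
    n i * e i = e (i - 1) ∧ e i * (v i / e i) = v i ∧ Nat.Coprime (n i) (v i / e i) := by
  have hei : e i = Nat.gcd (e (i - 1)) (v i) := he i h1 hg
  have hpos : 0 < e i := epos hvpos he0 he i hg
  have hd1 : e i ∣ e (i - 1) := hei ▸ Nat.gcd_dvd_left _ _
  have hd2 : e i ∣ v i := hei ▸ Nat.gcd_dvd_right _ _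
  refine ⟨?_, Nat.mul_div_cancel' hd2, ?_⟩
  · rw [hn i h1 hg]; exact Nat.div_mul_cancel hd1
  · rw [hn i h1 hg]
    have hgpos : 0 < Nat.gcd (e (i - 1)) (v i) := by rw [← hei]; exact hpos
    have := Nat.coprime_div_gcd_div_gcd (m := e (i - 1)) (n := v i) hgpos
    rwa [← hei] at this

lemma dvd_of_inGamma (he0 : e 0 = v 0)
    (he : ∀ i, 1 ≤ i → i ≤ g → e i = Nat.gcd (e (i - 1)) (v i))
    {m : ℕ} (hm : m ≤ g) {x : ℤ} (hx : InGamma m v x) : (e m : ℤ) ∣ x := by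
  obtain ⟨c, hc⟩ := hx
  rw [hc]
  refine Finset.dvd_sum fun i hi => Dvd.dvd.mul_left ?_ _
  exact_mod_cast Int.natCast_dvd_natCast.mpr
    (e_dvd_v he0 he m hm i (Finset.mem_range_succ_iff.mp hi))

lemma unique_rep (hvpos : ∀ i ≤ g, 0 < v i) (he0 : e 0 = v 0)
    (he : ∀ i, 1 ≤ i → i ≤ g → e i = Nat.gcd (e (i - 1)) (v i))
    (hn : ∀ i, 1 ≤ i → i ≤ g → n i = e (i - 1) / e i) :
    ∀ m ≤ g, ∀ s t : ℕ → ℤ,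
      (∀ i, 1 ≤ i → i ≤ m → 0 ≤ s i ∧ s i < n i) →
      (∀ i, 1 ≤ i → i ≤ m → 0 ≤ t i ∧ t i < n i) →
      (∑ i ∈ Finset.range (m + 1), s i * (v i : ℤ)) =
        ∑ i ∈ Finset.range (m + 1), t i * (v i : ℤ) →
      ∀ i ≤ m, s i = t i := by
  intro m
  induction m with
  | zero =>
      intro _ s t _ _ hsum i hi
      have : i = 0 := Nat.le_zero.mp hi
      subst this
      simp only [Finset.sum_range_succ, Finset.sum_range_zero, zero_add] at hsum
      have hv0 : (v 0 : ℤ) ≠ 0 := by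
        exact_mod_cast (hvpos 0 (Nat.zero_le _)).ne'
      exact mul_right_cancel₀ hv0 hsum
  | succ k ih =>
      intro hk s t hs ht hsum
      have hkg : k ≤ g := by omega
      obtain ⟨hne, hw, hcop⟩ := step_facts hvpos he0 he hn (k + 1) (by omega) hk
      simp only [Nat.add_sub_cancel] at hne
      set N := n (k + 1) with hN
      set E := e (k + 1) with hE
      set w := v (k + 1) / e (k + 1) with hwdef
      -- the top coefficients agree
      have hdvd : (e k : ℤ) ∣ (s (k + 1) - t (k + 1)) * (v (k + 1) : ℤ) := by
        have hzero : ∑ i ∈ Finset.range (k + 2), (s i - t i) * (v i : ℤ) = 0 := by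
          have := sub_eq_zero.mpr hsum
          rw [← Finset.sum_sub_distrib] at this
          simpa [sub_mul] using this
        rw [Finset.sum_range_succ] at hzero
        have h1 : (e k : ℤ) ∣ ∑ i ∈ Finset.range (k + 1), (s i - t i) * (v i : ℤ) := by
          refine Finset.dvd_sum fun i hi => Dvd.dvd.mul_left ?_ _
          exact_mod_cast Int.natCast_dvd_natCast.mpr
            (e_dvd_v he0 he k hkg i (Finset.mem_range_succ_iff.mp hi))
        have : (s (k + 1) - t (k + 1)) * (v (k + 1) : ℤ) =
            -(∑ i ∈ Finset.range (k + 1), (s i - t i) * (v i : ℤ)) := by linarith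
        rw [this]
        exact dvd_neg.mpr h1
      have hEpos : 0 < E := epos hvpos he0 he (k + 1) hk
      have hNd : (N : ℤ) ∣ (s (k + 1) - t (k + 1)) * (w : ℤ) := by
        have hrw : (e k : ℤ) = (N : ℤ) * (E : ℤ) := by exact_mod_cast hne.symm
        have hvw : (v (k + 1) : ℤ) = (E : ℤ) * (w : ℤ) := by exact_mod_cast hw.symm
        rw [hrw, hvw] at hdvd
        obtain ⟨c, hc⟩ := hdvd
        refine ⟨c, ?_⟩
        have hEne : (E : ℤ) ≠ 0 := by exact_mod_cast hEpos.ne'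
        have : (E : ℤ) * ((s (k + 1) - t (k + 1)) * (w : ℤ)) =
            (E : ℤ) * ((N : ℤ) * c) := by linarith [hc]
        exact mul_left_cancel₀ hEne this
      have hcopZ : IsCoprime (N : ℤ) (w : ℤ) := by
        rw [Nat.isCoprime_iff_coprime]; exact hcop
      have hNdvd : (N : ℤ) ∣ s (k + 1) - t (k + 1) :=
        (hcopZ.dvd_of_dvd_mul_right hNd)
      have htop : s (k + 1) = t (k + 1) := by
        obtain ⟨hs0, hs1⟩ := hs (k + 1) (by omega) le_rfl
        obtain ⟨ht0, ht1⟩ := ht (k + 1) (by omega) le_rfl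
        rw [← hN] at hs1 ht1
        by_contra hne'
        have habs : s (k + 1) - t (k + 1) ≠ 0 := sub_ne_zero.mpr hne'
        have hle := Int.le_of_dvd (abs_pos.mpr habs) ((dvd_abs _ _).mpr hNdvd)
        have hlt : |s (k + 1) - t (k + 1)| < (N : ℤ) :=
          abs_sub_lt_iff.mpr ⟨by linarith, by linarith⟩
        linarith
      intro i hi
      rcases Nat.eq_or_lt_of_le hi with h | h
      · subst h; exact htop
      · have hsum' : (∑ i ∈ Finset.range (k + 1), s i * (v i : ℤ)) =
            ∑ i ∈ Finset.range (k + 1), t i * (v i : ℤ) := by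
          have e1 := Finset.sum_range_succ (fun i => s i * (v i : ℤ)) (k + 1)
          have e2 := Finset.sum_range_succ (fun i => t i * (v i : ℤ)) (k + 1)
          rw [e1, e2, htop] at hsum
          linarith
        exact ih hkg s t (fun i h1 h2 => hs i h1 (by omega))
          (fun i h1 h2 => ht i h1 (by omega)) hsum' i (by omega)

lemma exists_rep (hvpos : ∀ i ≤ g, 0 < v i) (he0 : e 0 = v 0)
    (he : ∀ i, 1 ≤ i → i ≤ g → e i = Nat.gcd (e (i - 1)) (v i))
    (hn : ∀ i, 1 ≤ i → i ≤ g → n i = e (i - 1) / e i)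
    (hn1 : ∀ i, 1 ≤ i → i ≤ g → 1 < n i)
    (hmem : ∀ i, 1 ≤ i → i ≤ g → InGamma (i - 1) v ((n i : ℤ) * (v i : ℤ))) :
    ∀ m ≤ g, ∀ r : ℤ, (e m : ℤ) ∣ r →
      ∃ s : ℕ → ℤ, (∀ i, 1 ≤ i → i ≤ m → 0 ≤ s i ∧ s i < n i) ∧
        r = ∑ i ∈ Finset.range (m + 1), s i * (v i : ℤ) ∧
        (InGamma m v r ↔ 0 ≤ s 0) := by
  intro m
  induction m with
  | zero =>
      intro _ r hr
      rw [he0] at hr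
      have hv0 : (0 : ℤ) < (v 0 : ℤ) := by exact_mod_cast hvpos 0 (Nat.zero_le _)
      refine ⟨fun _ => r / (v 0 : ℤ), fun i h1 h2 => by omega, ?_, ?_⟩
      · rw [Finset.sum_range_one, Int.ediv_mul_cancel hr]
      · constructor
        · rintro ⟨c, hc⟩
          rw [Finset.sum_range_one] at hc
          rw [hc, Int.mul_ediv_cancel _ hv0.ne']
          positivity
        · intro h0
          refine ⟨fun _ => (r / (v 0 : ℤ)).toNat, ?_⟩
          rw [Finset.sum_range_one, Int.toNat_of_nonneg h0, Int.ediv_mul_cancel hr]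
  | succ m ih =>
      intro hmg r hr
      have hm : m ≤ g := by omega
      obtain ⟨hne, hw, hcop⟩ := step_facts hvpos he0 he hn (m + 1) (by omega) hmg
      simp only [Nat.add_sub_cancel] at hne
      set N := n (m + 1) with hNdef
      set E := e (m + 1) with hEdef
      set w := v (m + 1) / e (m + 1) with hwdef
      have hN1 : 1 < N := hn1 (m + 1) (by omega) hmg
      have hNpos : (0 : ℤ) < (N : ℤ) := by exact_mod_cast Nat.lt_of_lt_of_le Nat.zero_lt_one hN1.le
      have hEpos : 0 < E := epos hvpos he0 he (m + 1) hmg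
      obtain ⟨r', hr'⟩ := hr
      have hcopZ : IsCoprime (N : ℤ) (w : ℤ) := by
        rw [Nat.isCoprime_iff_coprime]; exact hcop
      obtain ⟨a, b, hab⟩ := hcopZ
      set sval : ℤ := (b * r') % (N : ℤ) with hsvaldef
      have hsval0 : 0 ≤ sval := Int.emod_nonneg _ hNpos.ne'
      have hsvalN : sval < (N : ℤ) := Int.emod_lt_of_pos _ hNpos
      have hq : sval = b * r' - (N : ℤ) * ((b * r') / (N : ℤ)) := Int.emod_def _ _
      have hNd : (N : ℤ) ∣ r' - sval * (w : ℤ) :=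
        ⟨a * r' + ((b * r') / (N : ℤ)) * (w : ℤ), by rw [hq]; linear_combination (-r' : ℤ) * hab⟩
      have hvw : (v (m + 1) : ℤ) = (E : ℤ) * (w : ℤ) := by exact_mod_cast hw.symm
      have hem : (e m : ℤ) = (N : ℤ) * (E : ℤ) := by exact_mod_cast hne.symm
      obtain ⟨k, hk⟩ := hNd
      have hr2dvd : (e m : ℤ) ∣ r - sval * (v (m + 1) : ℤ) := by
        refine ⟨k, ?_⟩
        rw [hem, hvw, hr']
        linear_combination (E : ℤ) * hk
      obtain ⟨s', hs'bd, hs'sum, hs'iff⟩ := ih hm (r - sval * (v (m + 1) : ℤ)) hr2dvd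
      refine ⟨fun i => if i = m + 1 then sval else s' i, ?_, ?_, ?_⟩
      · intro i h1 h2
        by_cases hi : i = m + 1
        · subst hi; simp only [↓reduceIte]; exact ⟨hsval0, hsvalN⟩
        · simp only [if_neg hi]; exact hs'bd i h1 (by omega)
      · show r = ∑ i ∈ Finset.range (m + 1 + 1), (if i = m + 1 then sval else s' i) * (v i : ℤ)
        rw [Finset.sum_range_succ]
        simp only [↓reduceIte]
        have hrest : ∑ i ∈ Finset.range (m + 1),
            (if i = m + 1 then sval else s' i) * (v i : ℤ) =
            ∑ i ∈ Finset.range (m + 1), s' i * (v i : ℤ) := by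
          refine Finset.sum_congr rfl fun i hi => ?_
          rw [if_neg (Nat.ne_of_lt (Finset.mem_range.mp hi))]
        rw [hrest, ← hs'sum]; ring
      · show InGamma (m + 1) v r ↔ 0 ≤ (if (0 : ℕ) = m + 1 then sval else s' 0)
        rw [if_neg (show (0 : ℕ) ≠ m + 1 by omega)]
        constructor
        · rintro ⟨c, hc⟩
          -- decompose the top coefficient
          set ρ : ℕ := c (m + 1) % N with hρdef
          set q : ℕ := c (m + 1) / N with hqdef
          have hcm : N * q + ρ = c (m + 1) := Nat.div_add_mod _ _
          have hρN : ρ < N := Nat.mod_lt _ (by omega)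
          have hmem' : InGamma m v ((N : ℤ) * (v (m + 1) : ℤ)) :=
            hmem (m + 1) (by omega) hmg
          have hg1 : InGamma m v (∑ i ∈ Finset.range (m + 1), (c i : ℤ) * (v i : ℤ)) :=
            ⟨c, rfl⟩
          have hg2 : InGamma m v ((q : ℤ) * ((N : ℤ) * (v (m + 1) : ℤ))) :=
            inGamma_nsmul q hmem'
          have hsum2 : r - (ρ : ℤ) * (v (m + 1) : ℤ) =
              (∑ i ∈ Finset.range (m + 1), (c i : ℤ) * (v i : ℤ)) +
              (q : ℤ) * ((N : ℤ) * (v (m + 1) : ℤ)) := by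
            rw [hc, Finset.sum_range_succ]
            have : (c (m + 1) : ℤ) = (N : ℤ) * q + (ρ : ℤ) := by exact_mod_cast hcm.symm
            rw [this]; ring
          have hgρ : InGamma m v (r - (ρ : ℤ) * (v (m + 1) : ℤ)) := by
            rw [hsum2]; exact inGamma_add hg1 hg2
          have hdvdρ : (e m : ℤ) ∣ r - (ρ : ℤ) * (v (m + 1) : ℤ) :=
            dvd_of_inGamma he0 he hm hgρ
          obtain ⟨t, htbd, htsum, htiff⟩ := ih hm (r - (ρ : ℤ) * (v (m + 1) : ℤ)) hdvdρ
          have ht0 : 0 ≤ t 0 := htiff.mp hgρ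
          -- uniqueness at level m + 1 of the two representations of r
          have hseq : ∀ i ≤ m + 1,
              (if i = m + 1 then sval else s' i) = (if i = m + 1 then (ρ : ℤ) else t i) := by
            refine unique_rep hvpos he0 he hn (m + 1) hmg _ _ ?_ ?_ ?_
            · intro i h1 h2
              by_cases hi : i = m + 1
              · subst hi; simp only [↓reduceIte]; exact ⟨hsval0, hsvalN⟩
              · simp only [if_neg hi]; exact hs'bd i h1 (by omega)
            · intro i h1 h2
              by_cases hi : i = m + 1
              · subst hi; simp only [↓reduceIte]
                exact ⟨Int.natCast_nonneg _, by exact_mod_cast hρN⟩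
              · simp only [if_neg hi]; exact htbd i h1 (by omega)
            · have e1 := Finset.sum_range_succ
                (fun i => (if i = m + 1 then sval else s' i) * (v i : ℤ)) (m + 1)
              have e2 := Finset.sum_range_succ
                (fun i => (if i = m + 1 then (ρ : ℤ) else t i) * (v i : ℤ)) (m + 1)
              simp only at e1 e2
              rw [e1, e2]
              simp only [↓reduceIte]
              have h1 : ∑ i ∈ Finset.range (m + 1),
                  (if i = m + 1 then sval else s' i) * (v i : ℤ) =
                  ∑ i ∈ Finset.range (m + 1), s' i * (v i : ℤ) :=
                Finset.sum_congr rfl fun i hi => by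
                  rw [if_neg (Nat.ne_of_lt (Finset.mem_range.mp hi))]
              have h2 : ∑ i ∈ Finset.range (m + 1),
                  (if i = m + 1 then (ρ : ℤ) else t i) * (v i : ℤ) =
                  ∑ i ∈ Finset.range (m + 1), t i * (v i : ℤ) :=
                Finset.sum_congr rfl fun i hi => by
                  rw [if_neg (Nat.ne_of_lt (Finset.mem_range.mp hi))]
              rw [h1, h2, ← hs'sum, ← htsum]; ring
          have h0eq : s' 0 = t 0 := by
            have := hseq 0 (by omega)
            simpa [if_neg (show (0 : ℕ) ≠ m + 1 by omega)] using this
          rw [h0eq]; exact ht0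
        · intro h0
          obtain ⟨c, hc⟩ := hs'iff.mpr h0
          refine ⟨fun i => if i = m + 1 then sval.toNat else c i, ?_⟩
          rw [Finset.sum_range_succ]
          simp only [↓reduceIte]
          have hrest : ∑ i ∈ Finset.range (m + 1),
              ((if i = m + 1 then sval.toNat else c i : ℕ) : ℤ) * (v i : ℤ) =
              ∑ i ∈ Finset.range (m + 1), (c i : ℤ) * (v i : ℤ) :=
            Finset.sum_congr rfl fun i hi => by
              rw [if_neg (Nat.ne_of_lt (Finset.mem_range.mp hi))]
          rw [hrest, ← hc, Int.toNat_of_nonneg hsval0]; ring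

end StdRepAux

/-- Standard representation with respect to a strongly increasing numerical semigroup:
every integer `r` is uniquely `r = s_0 v_0 + ∑_{i=1}^{g} s_i v_i` with `0 ≤ s_i < n_i`
for `1 ≤ i ≤ g` and `s_0 ∈ ℤ`; and `r ∈ Γ = ⟨v_0, …, v_g⟩` iff `s_0 ≥ 0`. -/
theorem standard_representation (g : ℕ) (v e n : ℕ → ℕ)
    (hvpos : ∀ i ≤ g, 0 < v i)
    (he0 : e 0 = v 0)
    (he : ∀ i, 1 ≤ i → i ≤ g → e i = Nat.gcd (e (i - 1)) (v i))
    (heg : e g = 1)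
    (hn : ∀ i, 1 ≤ i → i ≤ g → n i = e (i - 1) / e i)
    (hn1 : ∀ i, 1 ≤ i → i ≤ g → 1 < n i)
    (hn0 : n 0 = 1)
    (hinc : ∀ i < g, n i * v i < v (i + 1))
    (hmem : ∀ i, 1 ≤ i → i ≤ g → InGamma (i - 1) v ((n i : ℤ) * (v i : ℤ)))
    (r : ℤ) :
    (∃ s : ℕ → ℤ, (∀ i, 1 ≤ i → i ≤ g → 0 ≤ s i ∧ s i < n i) ∧
        r = ∑ i ∈ Finset.range (g + 1), s i * (v i : ℤ) ∧
        (InGamma g v r ↔ 0 ≤ s 0)) ∧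
    (∀ s t : ℕ → ℤ,
        (∀ i, 1 ≤ i → i ≤ g → 0 ≤ s i ∧ s i < n i) →
        (∀ i, 1 ≤ i → i ≤ g → 0 ≤ t i ∧ t i < n i) →
        r = ∑ i ∈ Finset.range (g + 1), s i * (v i : ℤ) →
        r = ∑ i ∈ Finset.range (g + 1), t i * (v i : ℤ) →
        ∀ i ≤ g, s i = t i) := by
  constructor
  · have hdvd : (e g : ℤ) ∣ r := by rw [heg]; exact one_dvd r
    exact StdRepAux.exists_rep hvpos he0 he hn hn1 hmem g le_rfl r hdvd
  · intro s t hs ht hrs hrt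
    exact StdRepAux.unique_rep hvpos he0 he hn g le_rfl s t hs ht (hrs.symm.trans hrt)
end

section
/- Let v_0, …, v_g and n_i, e_i be as in the strongly-increasing semigroup setup (e_i = gcd(v_0,…,v_i), e_g = 1, n_i = e_{i-1}/e_i > 1, v_{i+1} > n_i v_i, n_i v_i ∈ ⟨v_0,…,v_{i-1}⟩). Suppose s_1, …, s_g are integers with 0 ≤ s_i < n_i for all i, and suppose that for every k with 0 ≤ k ≤ g − 1 the integer e_k divides α := Σ_{i=1}^{g} (n_i − 1 − s_i) v_i. Then s_i = n_i − 1 for every 1 ≤ i ≤ g. -/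
/-- `r` is a nonnegative integer combination of `v 0, …, v (m-1)`. -/
def InSemi (v : ℕ → ℕ) (m : ℕ) (r : ℕ) : Prop :=
  ∃ c : ℕ → ℕ, r = ∑ j ∈ Finset.range m, c j * v j

/-- Numerical core of Lemma 4.4 of the paper: if `0 ≤ s_i < n_i` and every `e_k`
(`0 ≤ k ≤ g−1`) divides `α = ∑_{i=1}^{g} (n_i − 1 − s_i) v_i`, then `s_i = n_i − 1`
for all `1 ≤ i ≤ g`. -/
theorem all_si_eq (g : ℕ) (v e n : ℕ → ℕ)
    (hvpos : ∀ i ≤ g, 0 < v i)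
    (he0 : e 0 = v 0)
    (he : ∀ i, 1 ≤ i → i ≤ g → e i = Nat.gcd (e (i - 1)) (v i))
    (heg : e g = 1)
    (hn : ∀ i, 1 ≤ i → i ≤ g → n i = e (i - 1) / e i)
    (hn1 : ∀ i, 1 ≤ i → i ≤ g → 1 < n i)
    (hn0 : n 0 = 1)
    (hinc : ∀ i < g, n i * v i < v (i + 1))
    (hmem : ∀ i, 1 ≤ i → i ≤ g → InSemi v i (n i * v i))
    (s : ℕ → ℤ)
    (hs : ∀ i, 1 ≤ i → i ≤ g → 0 ≤ s i ∧ s i < n i)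
    (hdvd : ∀ k < g, (e k : ℤ) ∣ ∑ i ∈ Finset.Icc 1 g, ((n i : ℤ) - 1 - s i) * (v i : ℤ)) :
    ∀ i, 1 ≤ i → i ≤ g → s i = (n i : ℤ) - 1 := by
  -- positivity of e
  have hepos : ∀ k ≤ g, 0 < e k := by
    intro k hk
    induction k with
    | zero => rw [he0]; exact hvpos 0 (Nat.zero_le _)
    | succ m ih =>
      rw [he (m + 1) (Nat.succ_le_succ (Nat.zero_le _)) hk]
      simp only [Nat.add_sub_cancel]
      exact Nat.gcd_pos_of_pos_right _ (hvpos (m + 1) hk)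
  -- e k divides e j for j ≤ k
  have hee : ∀ k ≤ g, ∀ j ≤ k, e k ∣ e j := by
    intro k hk
    induction k with
    | zero => intro j hj; interval_cases j; exact dvd_rfl
    | succ m ih =>
      intro j hj
      have hd : e (m + 1) ∣ e m := by
        rw [he (m + 1) (Nat.succ_le_succ (Nat.zero_le _)) hk]
        simpa using Nat.gcd_dvd_left _ _
      rcases Nat.lt_or_ge j (m + 1) with h | h
      · exact hd.trans (ih (Nat.le_of_succ_le hk) j (Nat.lt_succ_iff.mp h))
      · have : j = m + 1 := le_antisymm hj h
        subst this; exact dvd_rfl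
  -- e k divides v j for j ≤ k
  have hev : ∀ k ≤ g, ∀ j ≤ k, e k ∣ v j := by
    intro k hk j hj
    rcases Nat.eq_zero_or_pos j with h | h
    · subst h; rw [← he0]; exact hee k hk 0 (Nat.zero_le _)
    · have h1 : e j ∣ v j := by
        rw [he j h (hj.trans hk)]; exact Nat.gcd_dvd_right _ _
      exact (hee k hk j hj).trans h1
  -- main downward induction
  have key : ∀ m : ℕ, ∀ i, 1 ≤ i → i ≤ g → g - i < m → s i = (n i : ℤ) - 1 := by
    intro m
    induction m with
    | zero => intro i _ _ h; exact absurd h (Nat.not_lt_zero _)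
    | succ m ih =>
      intro i hi1 hig hm
      by_contra hne
      -- all later terms vanish
      set t : ℕ → ℤ := fun j => ((n j : ℤ) - 1 - s j) * (v j : ℤ) with ht
      have hzero : ∀ j ∈ Finset.Icc 1 g, j ∉ Finset.Icc 1 i → t j = 0 := by
        intro j hj hj'
        simp only [Finset.mem_Icc] at hj hj'
        have hij : i < j := by omega
        have hsj : s j = (n j : ℤ) - 1 := ih j hj.1 hj.2 (by omega)
        simp [ht, hsj]
      have hsum : ∑ j ∈ Finset.Icc 1 g, t j = ∑ j ∈ Finset.Icc 1 i, t j := by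
        exact (Finset.sum_subset (Finset.Icc_subset_Icc_right hig) hzero).symm
      -- e (i-1) divides α
      have hd1 : (e (i - 1) : ℤ) ∣ ∑ j ∈ Finset.Icc 1 i, t j := by
        rw [← hsum]; exact hdvd (i - 1) (by omega)
      -- split off the top term
      have hi' : i = (i - 1) + 1 := by omega
      have hsplit : ∑ j ∈ Finset.Icc 1 i, t j
          = (∑ j ∈ Finset.Icc 1 (i - 1), t j) + t i := by
        rw [hi']
        exact Finset.sum_Icc_succ_top (by omega) t
      have hd2 : (e (i - 1) : ℤ) ∣ ∑ j ∈ Finset.Icc 1 (i - 1), t j := by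
        apply Finset.dvd_sum
        intro j hj
        simp only [Finset.mem_Icc] at hj
        have : (e (i - 1) : ℤ) ∣ (v j : ℤ) := by
          exact_mod_cast Int.natCast_dvd_natCast.mpr (hev (i - 1) (by omega) j hj.2)
        exact Dvd.dvd.mul_left this _
      have hd3 : (e (i - 1) : ℤ) ∣ t i := by
        have h := hd1
        rw [hsplit] at h
        have := dvd_sub h hd2
        simpa using this
      -- structure of e (i-1)
      have heiv : e i ∣ v i := by
        rw [he i hi1 hig]; exact Nat.gcd_dvd_right _ _
      have heie : e i ∣ e (i - 1) := by
        rw [he i hi1 hig]; exact Nat.gcd_dvd_left _ _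
      have heipos : 0 < e i := hepos i hig
      have hfac : e (i - 1) = n i * e i := by
        rw [hn i hi1 hig, Nat.div_mul_cancel heie]
      -- coprimality
      set W : ℕ := v i / e i with hW
      have hVW : v i = e i * W := (Nat.mul_div_cancel' heiv).symm
      have hcop : Nat.Coprime (n i) W := by
        have hgcd : Nat.gcd (e (i - 1)) (v i) = e i := (he i hi1 hig).symm
        have := Nat.coprime_div_gcd_div_gcd (m := e (i - 1)) (n := v i)
          (by rw [hgcd]; exact heipos)
        rw [hgcd] at this
        rw [hn i hi1 hig, hW]
        exact this
      -- set c := n i - 1 - s i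
      set c : ℤ := (n i : ℤ) - 1 - s i with hc
      obtain ⟨hs0, hsn⟩ := hs i hi1 hig
      have hcpos : 0 < c := by
        have : s i ≤ (n i : ℤ) - 1 := by omega
        rcases lt_or_eq_of_le this with h | h
        · omega
        · exact absurd h hne
      have hclt : c < (n i : ℤ) := by omega
      -- divisibility chain
      have hd4 : ((n i : ℤ) * (e i : ℤ)) ∣ c * ((e i : ℤ) * (W : ℤ)) := by
        have h1 : (e (i - 1) : ℤ) = (n i : ℤ) * (e i : ℤ) := by
          exact_mod_cast congrArg (Nat.cast : ℕ → ℤ) hfac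
        have h2 : (v i : ℤ) = (e i : ℤ) * (W : ℤ) := by
          exact_mod_cast congrArg (Nat.cast : ℕ → ℤ) hVW
        rw [← h1, ← h2]
        exact hd3
      have hd5 : (n i : ℤ) ∣ c * (W : ℤ) := by
        have hE : (e i : ℤ) ≠ 0 := by exact_mod_cast heipos.ne'
        rcases hd4 with ⟨q, hq⟩
        refine ⟨q, ?_⟩
        have : (e i : ℤ) * (c * (W : ℤ)) = (e i : ℤ) * ((n i : ℤ) * q) := by
          ring_nf
          ring_nf at hq
          linarith [hq]
        exact mul_left_cancel₀ hE this
      have hcopZ : IsCoprime ((n i : ℤ)) ((W : ℤ)) := by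
        rw [Nat.isCoprime_iff_coprime]
        exact hcop
      have hd6 : (n i : ℤ) ∣ c := hcopZ.dvd_of_dvd_mul_right hd5
      have := Int.le_of_dvd hcpos hd6
      omega
  intro i hi1 hig
  exact key (g + 1) i hi1 hig (by omega)
end

section
/- Let Γ = ⟨v_0, …, v_g⟩ be a strongly-increasing numerical semigroup as above (e_i = gcd(v_0,…,v_i), e_g = 1, n_i = e_{i-1}/e_i > 1, v_{i+1} > n_i v_i, n_i v_i ∈ ⟨v_0,…,v_{i-1}⟩) and set μ = Σ_{i=1}^{g}(n_i − 1)v_i − v_0 + 1. Then μ is the conductor of Γ: μ − 1 ∉ Γ, and every integer ≥ μ belongs to Γ. -/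
lemma split_sum (g : ℕ) (f : ℕ → ℤ) :
    ∑ i ∈ Finset.range (g+1), f i = f 0 + ∑ i ∈ Finset.Icc 1 g, f i := by
  induction g with
  | zero => simp
  | succ g ih =>
    rw [Finset.sum_range_succ, ih, Finset.sum_Icc_succ_top (by omega : 1 ≤ g + 1)]
    ring

lemma e_dvd_e (g : ℕ) (v e : ℕ → ℕ)
    (he : ∀ i, 1 ≤ i → i ≤ g → e i = Nat.gcd (e (i - 1)) (v i)) :
    ∀ i ≤ g, ∀ j ≤ i, e i ∣ e j := by
  intro i
  induction i with
  | zero => intro _ j hj; interval_cases j; exact dvd_rfl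
  | succ k ih =>
    intro hi j hj
    rcases Nat.eq_or_lt_of_le hj with h | h
    · subst h; exact dvd_rfl
    · have h1 : e (k+1) ∣ e k := by
        rw [he (k+1) (by omega) hi]
        simpa using Nat.gcd_dvd_left _ _
      exact h1.trans (ih (by omega) j (by omega))

lemma e_dvd_v (g : ℕ) (v e : ℕ → ℕ)
    (he0 : e 0 = v 0)
    (he : ∀ i, 1 ≤ i → i ≤ g → e i = Nat.gcd (e (i - 1)) (v i)) :
    ∀ i ≤ g, ∀ j ≤ i, e i ∣ v j := by
  intro i hi j hj
  have h1 : e i ∣ e j := e_dvd_e g v e he i hi j hj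
  have h2 : e j ∣ v j := by
    rcases Nat.eq_zero_or_pos j with h | h
    · subst h; rw [he0]
    · rw [he j h (le_trans hj hi)]
      exact Nat.gcd_dvd_right _ _
  exact h1.trans h2

lemma e_pos (g : ℕ) (v e : ℕ → ℕ)
    (hvpos : ∀ i ≤ g, 0 < v i)
    (he0 : e 0 = v 0)
    (he : ∀ i, 1 ≤ i → i ≤ g → e i = Nat.gcd (e (i - 1)) (v i)) :
    ∀ i ≤ g, 0 < e i := by
  intro i hi
  rcases Nat.eq_zero_or_pos i with h | h
  · subst h; rw [he0]; exact hvpos 0 (by omega)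
  · rw [he i h hi]
    exact Nat.gcd_pos_of_pos_right _ (hvpos i hi)

lemma e_eq_n_mul (g : ℕ) (v e n : ℕ → ℕ)
    (hvpos : ∀ i ≤ g, 0 < v i)
    (he0 : e 0 = v 0)
    (he : ∀ i, 1 ≤ i → i ≤ g → e i = Nat.gcd (e (i - 1)) (v i))
    (hn : ∀ i, 1 ≤ i → i ≤ g → n i = e (i - 1) / e i) :
    ∀ i, 1 ≤ i → i ≤ g → e (i - 1) = n i * e i := by
  intro i h1 h2
  have hd : e i ∣ e (i-1) := by
    rw [he i h1 h2]; exact Nat.gcd_dvd_left _ _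
  rw [hn i h1 h2, Nat.div_mul_cancel hd]
lemma exists_std (g : ℕ) (v e n : ℕ → ℕ)
    (he0 : e 0 = v 0)
    (he : ∀ i, 1 ≤ i → i ≤ g → e i = Nat.gcd (e (i - 1)) (v i))
    (hen : ∀ i, 1 ≤ i → i ≤ g → e (i-1) = n i * e i)
    (hedvdv : ∀ i ≤ g, ∀ j ≤ i, e i ∣ v j)
    (hnpos : ∀ i, 1 ≤ i → i ≤ g → 0 < n i) :
    ∀ k ≤ g, ∀ r : ℤ, (e k : ℤ) ∣ r →
      ∃ a : ℕ → ℤ, r = ∑ i ∈ Finset.range (k+1), a i * (v i : ℤ) ∧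
        ∀ i, 1 ≤ i → i ≤ k → 0 ≤ a i ∧ a i < n i := by
  intro k
  induction k with
  | zero =>
    intro _ r hr
    obtain ⟨t, ht⟩ := hr
    refine ⟨fun _ => t, ?_, by omega⟩
    simp [ht, he0]; ring
  | succ k ih =>
    intro hk r hr
    have hk' : k ≤ g := by omega
    set N : ℤ := (n (k+1) : ℤ) with hN
    have hNpos : (0:ℤ) < N := by rw [hN]; exact_mod_cast hnpos (k+1) (by omega) hk
    have hgcd : (e (k+1) : ℤ) = (Nat.gcd (e k) (v (k+1)) : ℤ) := by
      have := he (k+1) (by omega) hk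
      simp at this
      exact_mod_cast this
    -- Bezout
    have hbez : (e (k+1) : ℤ) = (e k : ℤ) * Nat.gcdA (e k) (v (k+1))
        + (v (k+1) : ℤ) * Nat.gcdB (e k) (v (k+1)) := by
      rw [hgcd]; exact Nat.gcd_eq_gcd_ab _ _
    obtain ⟨s, hs⟩ := hr
    set t : ℤ := s * Nat.gcdB (e k) (v (k+1)) with ht
    have htd : (e k : ℤ) ∣ r - t * (v (k+1) : ℤ) := by
      refine ⟨s * Nat.gcdA (e k) (v (k+1)), ?_⟩
      rw [hs, hbez]; ring
    set a : ℤ := t % N with ha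
    have ha0 : 0 ≤ a := Int.emod_nonneg t (by omega)
    have haN : a < N := Int.emod_lt_of_pos t hNpos
    have hta : t - a = N * (t / N) := by
      rw [ha, Int.emod_def]; ring
    have heN : (e k : ℤ) = N * (e (k+1) : ℤ) := by
      have := hen (k+1) (by omega) hk
      simp at this
      rw [hN]; exact_mod_cast this
    obtain ⟨w, hw⟩ : (e (k+1) : ℤ) ∣ (v (k+1) : ℤ) := by
      exact_mod_cast Int.natCast_dvd_natCast.mpr (hedvdv (k+1) hk (k+1) le_rfl)
    have hdvd2 : (e k : ℤ) ∣ r - a * (v (k+1) : ℤ) := by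
      have h1 : r - a * (v (k+1) : ℤ) =
          (r - t * (v (k+1) : ℤ)) + (t / N) * w * (e k : ℤ) := by
        have : (t - a) * (v (k+1) : ℤ) = (t / N) * w * (e k : ℤ) := by
          rw [hta, heN, hw]; ring
        nlinarith [this]
      rw [h1]
      exact dvd_add htd (Dvd.intro_left _ rfl)
    obtain ⟨a', ha'sum, ha'b⟩ := ih hk' (r - a * (v (k+1) : ℤ)) hdvd2
    refine ⟨fun i => if i = k+1 then a else a' i, ?_, ?_⟩
    · rw [Finset.sum_range_succ]
      have : ∑ i ∈ Finset.range (k+1), (if i = k+1 then a else a' i) * (v i : ℤ)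
          = ∑ i ∈ Finset.range (k+1), a' i * (v i : ℤ) := by
        refine Finset.sum_congr rfl fun i hi => ?_
        rw [if_neg (by simp at hi; omega)]
      rw [this, ← ha'sum]
      simp
    · intro i h1 h2
      by_cases h : i = k+1
      · subst h; simp [ha0, haN]; exact haN
      · have := ha'b i h1 (by omega)
        simp [h, this]
lemma std_unique (g : ℕ) (v e n : ℕ → ℕ)
    (hvpos : ∀ i ≤ g, 0 < v i)
    (he : ∀ i, 1 ≤ i → i ≤ g → e i = Nat.gcd (e (i - 1)) (v i))
    (hen : ∀ i, 1 ≤ i → i ≤ g → e (i-1) = n i * e i)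
    (hedvdv : ∀ i ≤ g, ∀ j ≤ i, e i ∣ v j)
    (hepos : ∀ i ≤ g, 0 < e i) :
    ∀ k ≤ g, ∀ a b : ℕ → ℤ,
      (∀ i, 1 ≤ i → i ≤ k → 0 ≤ a i ∧ a i < n i) →
      (∀ i, 1 ≤ i → i ≤ k → 0 ≤ b i ∧ b i < n i) →
      ∑ i ∈ Finset.range (k+1), a i * (v i : ℤ) =
        ∑ i ∈ Finset.range (k+1), b i * (v i : ℤ) →
      ∀ i ≤ k, a i = b i := by
  intro k
  induction k with
  | zero =>
    intro _ a b _ _ heq i hi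
    interval_cases i
    simp only [Finset.sum_range_succ, Finset.sum_range_zero, zero_add] at heq
    have hv0 : (0:ℤ) < (v 0 : ℤ) := by exact_mod_cast hvpos 0 (by omega)
    exact mul_right_cancel₀ (ne_of_gt hv0) heq
  | succ k ih =>
    intro hk a b hab hbb heq
    have hk' : k ≤ g := by omega
    have hs1 := Finset.sum_range_succ (fun i => a i * (v i : ℤ)) (k+1)
    have hs2 := Finset.sum_range_succ (fun i => b i * (v i : ℤ)) (k+1)
    rw [hs1, hs2] at heq
    set d : ℤ := b (k+1) - a (k+1) with hd
    have hsub : ∑ i ∈ Finset.range (k+1), (a i - b i) * (v i : ℤ) = d * (v (k+1) : ℤ) := by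
      have : ∑ i ∈ Finset.range (k+1), (a i - b i) * (v i : ℤ)
          = ∑ i ∈ Finset.range (k+1), a i * (v i : ℤ)
            - ∑ i ∈ Finset.range (k+1), b i * (v i : ℤ) := by
        rw [← Finset.sum_sub_distrib]
        exact Finset.sum_congr rfl fun i _ => by ring
      rw [this]; rw [hd]; linarith [heq]
    have hdvdL : (e k : ℤ) ∣ d * (v (k+1) : ℤ) := by
      rw [← hsub]
      refine Finset.dvd_sum fun i hi => ?_
      have : (e k : ℤ) ∣ (v i : ℤ) := by
        exact_mod_cast Int.natCast_dvd_natCast.mpr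
          (hedvdv k hk' i (by simpa using Nat.lt_succ_iff.mp (Finset.mem_range.mp hi)))
      exact Dvd.dvd.mul_left this _
    -- factor out e (k+1)
    obtain ⟨w, hw⟩ : e (k+1) ∣ v (k+1) := hedvdv (k+1) hk (k+1) le_rfl
    have heN : e k = n (k+1) * e (k+1) := by
      have := hen (k+1) (by omega) hk; simpa using this
    have hepos' : 0 < e (k+1) := hepos (k+1) hk
    -- coprimality of n (k+1) and w
    have hcop : Nat.Coprime (n (k+1)) w := by
      have hg : e (k+1) = Nat.gcd (e k) (v (k+1)) := by
        have := he (k+1) (by omega) hk; simpa using this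
      have : e (k+1) * 1 = e (k+1) * Nat.gcd (n (k+1)) w := by
        conv_lhs => rw [mul_one, hg, heN, hw, mul_comm (n (k+1)) (e (k+1)), Nat.gcd_mul_left]
      exact (Nat.eq_of_mul_eq_mul_left hepos' this).symm
    -- from (e k) ∣ d * v(k+1) deduce n(k+1) ∣ d * w
    have hdw : (n (k+1) : ℤ) ∣ d * (w : ℤ) := by
      obtain ⟨q, hq⟩ := hdvdL
      refine ⟨q, ?_⟩
      have hE : ((e (k+1) : ℤ)) ≠ 0 := by exact_mod_cast hepos'.ne'
      apply mul_left_cancel₀ hE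
      have h1 : (v (k+1) : ℤ) = (e (k+1) : ℤ) * (w : ℤ) := by exact_mod_cast hw
      have h2 : (e k : ℤ) = (n (k+1) : ℤ) * (e (k+1) : ℤ) := by exact_mod_cast heN
      rw [h1] at hq; rw [h2] at hq
      linarith [hq]
    have hnd : (n (k+1) : ℤ) ∣ d := by
      have hc : IsCoprime ((n (k+1) : ℤ)) ((w : ℤ)) := by
        rw [Int.isCoprime_iff_gcd_eq_one]
        simpa using hcop
      exact hc.dvd_of_dvd_mul_right hdw
    have hdz : d = 0 := by
      refine Int.eq_zero_of_abs_lt_dvd hnd ?_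
      have h1 := hab (k+1) (by omega) le_rfl
      have h2 := hbb (k+1) (by omega) le_rfl
      rw [hd, abs_lt]; constructor <;> omega
    have hab1 : a (k+1) = b (k+1) := by omega
    have heq' : ∑ i ∈ Finset.range (k+1), a i * (v i : ℤ)
        = ∑ i ∈ Finset.range (k+1), b i * (v i : ℤ) := by
      rw [hab1] at heq; linarith [heq]
    have hrec := ih hk' a b (fun i h1 h2 => hab i h1 (by omega))
      (fun i h1 h2 => hbb i h1 (by omega)) heq'
    intro i hi
    rcases Nat.eq_or_lt_of_le hi with h | h
    · rw [h]; exact hab1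
    · exact hrec i (by omega)
lemma reduce (g : ℕ) (v n : ℕ → ℕ)
    (hn1 : ∀ i, 1 ≤ i → i ≤ g → 1 < n i)
    (hmem : ∀ i, 1 ≤ i → i ≤ g → InGamma (i - 1) v ((n i : ℤ) * (v i : ℤ))) :
    ∀ k ≤ g, ∀ c : ℕ → ℕ, ∃ a : ℕ → ℤ,
      ∑ i ∈ Finset.range (k+1), (c i : ℤ) * (v i : ℤ) =
        ∑ i ∈ Finset.range (k+1), a i * (v i : ℤ) ∧
      0 ≤ a 0 ∧ ∀ i, 1 ≤ i → i ≤ k → 0 ≤ a i ∧ a i < n i := by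
  intro k
  induction k with
  | zero =>
    intro _ c
    exact ⟨fun i => (c i : ℤ), rfl, by positivity, by omega⟩
  | succ k ih =>
    intro hk c
    have hk' : k ≤ g := by omega
    obtain ⟨dd, hdd⟩ := hmem (k+1) (by omega) hk
    simp only [Nat.add_sub_cancel] at hdd
    -- hdd : (n (k+1) : ℤ) * (v (k+1) : ℤ) = ∑ i ∈ Finset.range (k+1), (dd i : ℤ) * (v i : ℤ)
    set N := n (k+1) with hN
    set q := c (k+1) / N with hq
    set s := c (k+1) % N with hs
    have hNpos : 0 < N := by have := hn1 (k+1) (by omega) hk; omega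
    have hcs : (c (k+1) : ℤ) = (q : ℤ) * (N : ℤ) + (s : ℤ) := by
      have hx : (N:ℤ) * q + s = c (k+1) := by exact_mod_cast Nat.div_add_mod (c (k+1)) N
      linarith
    obtain ⟨a', ha'sum, ha'0, ha'b⟩ := ih hk' (fun i => c i + q * dd i)
    set A : ℕ → ℤ := fun i => if i = k+1 then (s : ℤ) else a' i with hA
    have hAne : ∀ i, i ≠ k+1 → A i = a' i := fun i h => if_neg h
    have hAeq : A (k+1) = (s : ℤ) := if_pos rfl
    refine ⟨A, ?_, ?_, ?_⟩
    · rw [Finset.sum_range_succ (fun i => A i * (v i : ℤ)) (k+1),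
        Finset.sum_range_succ (fun i => (c i : ℤ) * (v i : ℤ)) (k+1)]
      have h1 : ∑ i ∈ Finset.range (k+1), A i * (v i : ℤ)
          = ∑ i ∈ Finset.range (k+1), a' i * (v i : ℤ) := by
        refine Finset.sum_congr rfl fun i hi => ?_
        rw [hAne i (by simp at hi; omega)]
      rw [h1, hAeq, ← ha'sum]
      have h2 : ∑ i ∈ Finset.range (k+1), ((c i + q * dd i : ℕ) : ℤ) * (v i : ℤ)
          = ∑ i ∈ Finset.range (k+1), (c i : ℤ) * (v i : ℤ)
            + (q : ℤ) * ((N : ℤ) * (v (k + 1) : ℤ)) := by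
        rw [hdd, Finset.mul_sum, ← Finset.sum_add_distrib]
        refine Finset.sum_congr rfl fun i hi => ?_
        push_cast; ring
      rw [h2, hcs]; ring
    · rw [hAne 0 (by omega)]; exact ha'0
    · intro i h1 h2
      by_cases h : i = k+1
      · subst h
        rw [hAeq]
        have hsN : s < N := Nat.mod_lt _ hNpos
        exact ⟨by positivity, by exact_mod_cast hsN⟩
      · rw [hAne i h]
        exact ha'b i h1 (by omega)

/-- `μ = ∑_{i=1}^{g} (n_i − 1) v_i − v_0 + 1` is the conductor of the strongly
increasing numerical semigroup `Γ = ⟨v_0, …, v_g⟩`: `μ − 1 ∉ Γ` and every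
integer `≥ μ` belongs to `Γ`. -/
theorem milnor_is_conductor (g : ℕ) (v e n : ℕ → ℕ)
    (hvpos : ∀ i ≤ g, 0 < v i)
    (he0 : e 0 = v 0)
    (he : ∀ i, 1 ≤ i → i ≤ g → e i = Nat.gcd (e (i - 1)) (v i))
    (heg : e g = 1)
    (hn : ∀ i, 1 ≤ i → i ≤ g → n i = e (i - 1) / e i)
    (hn1 : ∀ i, 1 ≤ i → i ≤ g → 1 < n i)
    (hn0 : n 0 = 1)
    (hinc : ∀ i < g, n i * v i < v (i + 1))
    (hmem : ∀ i, 1 ≤ i → i ≤ g → InGamma (i - 1) v ((n i : ℤ) * (v i : ℤ)))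
    (μ : ℤ)
    (hμ : μ = (∑ i ∈ Finset.Icc 1 g, ((n i : ℤ) - 1) * (v i : ℤ)) - (v 0 : ℤ) + 1) :
    ¬ InGamma g v (μ - 1) ∧ ∀ r : ℤ, μ ≤ r → InGamma g v r := by
  have hedvdv := e_dvd_v g v e he0 he
  have hepos := e_pos g v e hvpos he0 he
  have hen := e_eq_n_mul g v e n hvpos he0 he hn
  have hnpos : ∀ i, 1 ≤ i → i ≤ g → 0 < n i := fun i h1 h2 => by
    have := hn1 i h1 h2; omega
  -- the "standard" representation of μ - 1
  set b : ℕ → ℤ := fun i => if i = 0 then (-1 : ℤ) else (n i : ℤ) - 1 with hb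
  have hbsum : ∑ i ∈ Finset.range (g+1), b i * (v i : ℤ) = μ - 1 := by
    rw [split_sum g (fun i => b i * (v i : ℤ))]
    have h1 : b 0 = -1 := if_pos rfl
    have h2 : ∑ i ∈ Finset.Icc 1 g, b i * (v i : ℤ)
        = ∑ i ∈ Finset.Icc 1 g, ((n i : ℤ) - 1) * (v i : ℤ) := by
      refine Finset.sum_congr rfl fun i hi => ?_
      have : i ≠ 0 := by have := Finset.mem_Icc.mp hi; omega
      rw [show b i = (n i : ℤ) - 1 from if_neg this]
    rw [h1, h2, hμ]; ring
  have hbbd : ∀ i, 1 ≤ i → i ≤ g → 0 ≤ b i ∧ b i < n i := by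
    intro i h1 h2
    have h3 : i ≠ 0 := by omega
    rw [show b i = (n i : ℤ) - 1 from if_neg h3]
    have := hn1 i h1 h2
    constructor
    · have : (1:ℤ) < n i := by exact_mod_cast this
      linarith
    · linarith
  constructor
  · rintro ⟨c, hc⟩
    obtain ⟨a, hasum, ha0, habd⟩ := reduce g v n hn1 hmem g le_rfl c
    have heq : ∑ i ∈ Finset.range (g+1), a i * (v i : ℤ)
        = ∑ i ∈ Finset.range (g+1), b i * (v i : ℤ) := by
      rw [← hasum, hbsum, ← hc]
    have := std_unique g v e n hvpos he hen hedvdv hepos g le_rfl a b habd hbbd heq 0 (by omega)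
    rw [show b 0 = -1 from if_pos rfl] at this
    omega
  · intro r hr
    have hone : (e g : ℤ) ∣ r := by rw [heg]; exact one_dvd _
    obtain ⟨a, hasum, habd⟩ := exists_std g v e n he0 he hen hedvdv hnpos g le_rfl r hone
    have ha0 : 0 ≤ a 0 := by
      by_contra hcon
      push_neg at hcon
      have ha0' : a 0 ≤ -1 := by omega
      have hrle : r ≤ μ - 1 := by
        rw [hasum, split_sum g (fun i => a i * (v i : ℤ))]
        have h1 : a 0 * (v 0 : ℤ) ≤ -1 * (v 0 : ℤ) :=
          mul_le_mul_of_nonneg_right ha0' (by positivity)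
        have h2 : ∑ i ∈ Finset.Icc 1 g, a i * (v i : ℤ)
            ≤ ∑ i ∈ Finset.Icc 1 g, ((n i : ℤ) - 1) * (v i : ℤ) := by
          refine Finset.sum_le_sum fun i hi => ?_
          obtain ⟨hi1, hi2⟩ := Finset.mem_Icc.mp hi
          have := habd i hi1 hi2
          exact mul_le_mul_of_nonneg_right (by omega) (by positivity)
        rw [hμ]; linarith
      omega
    refine ⟨fun i => (a i).toNat, ?_⟩
    rw [hasum]
    refine Finset.sum_congr rfl fun i hi => ?_
    have hile : i ≤ g := by have := Finset.mem_range.mp hi; omega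
    have hnn : 0 ≤ a i := by
      rcases Nat.eq_zero_or_pos i with h | h
      · rw [h]; exact ha0
      · exact (habd i h hile).1
    rw [Int.toNat_of_nonneg hnn]
end

section
/- Let Γ = ⟨v_0, …, v_g⟩ be a strongly-increasing numerical semigroup as above with conductor μ = Σ_{i=1}^{g}(n_i − 1)v_i − v_0 + 1. Then Γ is symmetric: for every integer r, r ∈ Γ if and only if μ − 1 − r ∉ Γ. Consequently, the number of gaps satisfies #(ℕ \ Γ) = μ/2. -/
section Aux
variable {g : ℕ} {v e n : ℕ → ℕ}

lemma range_split (g : ℕ) (f : ℕ → ℤ) :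
    ∑ i ∈ Finset.range (g + 1), f i = f 0 + ∑ i ∈ Finset.Icc 1 g, f i := by
  have h : Finset.range (g + 1) = insert 0 (Finset.Icc 1 g) := by
    ext x; simp only [Finset.mem_range, Finset.mem_insert, Finset.mem_Icc]; omega
  rw [h, Finset.sum_insert (by simp)]

lemma epos (hvpos : ∀ i ≤ g, 0 < v i) (he0 : e 0 = v 0)
    (he : ∀ i, 1 ≤ i → i ≤ g → e i = Nat.gcd (e (i - 1)) (v i)) :
    ∀ i ≤ g, 0 < e i := by
  intro i hi
  match i with
  | 0 => rw [he0]; exact hvpos 0 (Nat.zero_le g)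
  | (k+1) =>
    rw [he (k+1) (by omega) hi]
    exact Nat.gcd_pos_of_pos_right _ (hvpos (k+1) hi)

lemma edvd_succ (he : ∀ i, 1 ≤ i → i ≤ g → e i = Nat.gcd (e (i - 1)) (v i)) :
    ∀ i, 1 ≤ i → i ≤ g → e i ∣ e (i - 1) := by
  intro i h1 hg; rw [he i h1 hg]; exact Nat.gcd_dvd_left _ _

lemma edvd_le (he : ∀ i, 1 ≤ i → i ≤ g → e i = Nat.gcd (e (i - 1)) (v i)) :
    ∀ i, i ≤ g → ∀ j, j ≤ i → e i ∣ e j := by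
  intro i
  induction i with
  | zero => intro _ j hj; have : j = 0 := by omega
            subst this; exact dvd_rfl
  | succ k ih =>
    intro hi j hj
    rcases eq_or_lt_of_le hj with h | h
    · subst h; exact dvd_rfl
    · exact dvd_trans (by simpa using edvd_succ he (k+1) (by omega) hi) (ih (by omega) j (by omega))

lemma edvd_v (he0 : e 0 = v 0)
    (he : ∀ i, 1 ≤ i → i ≤ g → e i = Nat.gcd (e (i - 1)) (v i)) :
    ∀ i, i ≤ g → ∀ j, j ≤ i → e i ∣ v j := by
  intro i hi j hj
  match j with
  | 0 => rw [← he0]; exact edvd_le he i hi 0 (Nat.zero_le _)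
  | (m+1) =>
    have h1 : e (m+1) ∣ v (m+1) := by
      rw [he (m+1) (by omega) (by omega)]; exact Nat.gcd_dvd_right _ _
    exact dvd_trans (edvd_le he i hi (m+1) hj) h1

lemma n_mul_e (he : ∀ i, 1 ≤ i → i ≤ g → e i = Nat.gcd (e (i - 1)) (v i))
    (hn : ∀ i, 1 ≤ i → i ≤ g → n i = e (i - 1) / e i) :
    ∀ i, 1 ≤ i → i ≤ g → n i * e i = e (i - 1) := by
  intro i h1 hg; rw [hn i h1 hg]; exact Nat.div_mul_cancel (edvd_succ he i h1 hg)

lemma coprime_nw (hvpos : ∀ i ≤ g, 0 < v i) (he0 : e 0 = v 0)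
    (he : ∀ i, 1 ≤ i → i ≤ g → e i = Nat.gcd (e (i - 1)) (v i))
    (hn : ∀ i, 1 ≤ i → i ≤ g → n i = e (i - 1) / e i) :
    ∀ i, 1 ≤ i → i ≤ g → Nat.Coprime (n i) (v i / e i) := by
  intro i h1 hg
  have hgcd := he i h1 hg
  have hpos : 0 < Nat.gcd (e (i-1)) (v i) := by
    rw [← hgcd]; exact epos hvpos he0 he i hg
  rw [hn i h1 hg, hgcd]
  exact Nat.coprime_div_gcd_div_gcd hpos

end Aux

section Aux2
variable {g : ℕ} {v e n : ℕ → ℕ}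

lemma keyB (hvpos : ∀ i ≤ g, 0 < v i) (he0 : e 0 = v 0)
    (he : ∀ i, 1 ≤ i → i ≤ g → e i = Nat.gcd (e (i - 1)) (v i))
    (hn : ∀ i, 1 ≤ i → i ≤ g → n i = e (i - 1) / e i) :
    ∀ k, k ≤ g → ∀ Δ : ℕ → ℤ, (∀ i, 1 ≤ i → i ≤ k → |Δ i| < n i) →
    (v 0 : ℤ) ∣ ∑ i ∈ Finset.Icc 1 k, Δ i * (v i : ℤ) →
    ∀ i, 1 ≤ i → i ≤ k → Δ i = 0 := by
  intro k
  induction k with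
  | zero => intro _ _ _ _ i h1 h2; omega
  | succ k ih =>
    intro hk Δ hbox hdvd
    have hsum : ∑ i ∈ Finset.Icc 1 (k+1), Δ i * (v i : ℤ)
        = (∑ i ∈ Finset.Icc 1 k, Δ i * (v i : ℤ)) + Δ (k+1) * (v (k+1) : ℤ) := by
      rw [Finset.sum_Icc_succ_top (by omega)]
    have hek_sum : (e k : ℤ) ∣ ∑ i ∈ Finset.Icc 1 k, Δ i * (v i : ℤ) := by
      refine Finset.dvd_sum fun i hi => Dvd.dvd.mul_left ?_ _
      have := edvd_v he0 he k (by omega) i (Finset.mem_Icc.mp hi).2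
      exact_mod_cast Int.natCast_dvd_natCast.mpr this
    have hek_v0 : (e k : ℤ) ∣ (v 0 : ℤ) :=
      Int.natCast_dvd_natCast.mpr (edvd_v he0 he k (by omega) 0 (Nat.zero_le _))
    have htop : (e k : ℤ) ∣ Δ (k+1) * (v (k+1) : ℤ) := by
      have h1 : (e k : ℤ) ∣ ∑ i ∈ Finset.Icc 1 (k+1), Δ i * (v i : ℤ) :=
        dvd_trans hek_v0 hdvd
      rw [hsum] at h1
      exact (dvd_add_right hek_sum).mp h1
    -- cancel e (k+1)
    have hvw : v (k+1) = v (k+1) / e (k+1) * e (k+1) :=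
      (Nat.div_mul_cancel (by
        rw [he (k+1) (by omega) hk]; exact Nat.gcd_dvd_right _ _)).symm
    have hne : e k = n (k+1) * e (k+1) := by
      have := n_mul_e he hn (k+1) (by omega) hk
      simpa using this.symm
    have hepos : (0 : ℤ) < (e (k+1) : ℤ) := by
      exact_mod_cast epos hvpos he0 he (k+1) hk
    have htop2 : (n (k+1) : ℤ) ∣ Δ (k+1) * ((v (k+1) / e (k+1) : ℕ) : ℤ) := by
      have hcast : ((v (k+1) : ℕ) : ℤ) = ((v (k+1) / e (k+1) : ℕ) : ℤ) * (e (k+1) : ℤ) := by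
        exact_mod_cast congrArg (Nat.cast : ℕ → ℤ) hvw
      have hek : (e k : ℤ) = (n (k+1) : ℤ) * (e (k+1) : ℤ) := by
        exact_mod_cast congrArg (Nat.cast : ℕ → ℤ) hne
      have h2 : (n (k+1) : ℤ) * (e (k+1) : ℤ) ∣ (Δ (k+1) * ((v (k+1) / e (k+1) : ℕ) : ℤ)) * (e (k+1) : ℤ) := by
        rw [← hek]
        have heq : Δ (k+1) * ((v (k+1) / e (k+1) : ℕ) : ℤ) * (e (k+1) : ℤ) = Δ (k+1) * (v (k+1) : ℤ) := by
          rw [hcast]; ring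
        rw [heq]; exact htop
      exact (mul_dvd_mul_iff_right (ne_of_gt hepos)).mp h2
    have hcop : IsCoprime (n (k+1) : ℤ) ((v (k+1) / e (k+1) : ℕ) : ℤ) :=
      Nat.isCoprime_iff_coprime.mpr (coprime_nw hvpos he0 he hn (k+1) (by omega) hk)
    have hndvd : (n (k+1) : ℤ) ∣ Δ (k+1) := hcop.dvd_of_dvd_mul_right htop2
    have hΔ0 : Δ (k+1) = 0 := by
      by_contra h0
      have h1 : (n (k+1) : ℤ) ≤ |Δ (k+1)| :=
        Int.le_of_dvd (abs_pos.mpr h0) ((dvd_abs _ _).mpr hndvd)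
      have h2 := hbox (k+1) (by omega) (by omega)
      omega
    intro i h1 h2
    rcases Nat.lt_or_ge i (k+1) with h | h
    · refine ih (by omega) Δ (fun j hj1 hj2 => hbox j hj1 (by omega)) ?_ i h1 (by omega)
      rw [hsum, hΔ0, zero_mul, add_zero] at hdvd
      exact hdvd
    · have : i = k + 1 := by omega
      rw [this]; exact hΔ0

end Aux2

section Aux3
variable {g : ℕ} {v e n : ℕ → ℕ}

lemma keyA (hvpos : ∀ i ≤ g, 0 < v i) (he0 : e 0 = v 0)
    (he : ∀ i, 1 ≤ i → i ≤ g → e i = Nat.gcd (e (i - 1)) (v i))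
    (hn : ∀ i, 1 ≤ i → i ≤ g → n i = e (i - 1) / e i)
    (hn1 : ∀ i, 1 ≤ i → i ≤ g → 1 < n i) :
    ∀ k, k ≤ g → ∀ r : ℤ, (e k : ℤ) ∣ r → ∃ (c0 : ℤ) (c : ℕ → ℕ),
      (∀ i, 1 ≤ i → i ≤ k → c i < n i) ∧
      r = c0 * (v 0 : ℤ) + ∑ i ∈ Finset.Icc 1 k, (c i : ℤ) * (v i : ℤ) := by
  intro k
  induction k with
  | zero =>
    intro _ r hr
    obtain ⟨c0, hc0⟩ := hr
    refine ⟨c0, fun _ => 0, by omega, ?_⟩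
    rw [hc0, he0]; simp [mul_comm]
  | succ k ih =>
    intro hk r hr
    -- Bezout: e (k+1) = gcd (e k) (v (k+1))
    have hgcd : (e (k+1) : ℤ) = (e k : ℤ) * Int.gcdA (e k) (v (k+1)) + (v (k+1) : ℤ) * Int.gcdB (e k) (v (k+1)) := by
      have h1 : e (k+1) = Nat.gcd (e k) (v (k+1)) := by simpa using he (k+1) (by omega) hk
      have h2 := Int.gcd_eq_gcd_ab (e k : ℤ) (v (k+1) : ℤ)
      rw [h1]
      simpa [Int.gcd_natCast_natCast] using h2
    set A := Int.gcdA (e k) (v (k+1)) with hA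
    set B := Int.gcdB (e k) (v (k+1)) with hB
    set q : ℤ := r / (e (k+1) : ℤ) with hq
    have hrq : r = q * (e (k+1) : ℤ) := (Int.ediv_mul_cancel hr).symm
    set b : ℤ := q * B with hb
    have hrab : r = (q * A) * (e k : ℤ) + b * (v (k+1) : ℤ) := by
      rw [hrq]; rw [hgcd]  -- careful: rewrite only once
      ring
    have hnpos : (0 : ℤ) < (n (k+1) : ℤ) := by
      have := hn1 (k+1) (by omega) hk; exact_mod_cast by omega
    set c : ℤ := b % (n (k+1) : ℤ) with hc
    have hc0 : 0 ≤ c := Int.emod_nonneg b (by omega)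
    have hclt : c < (n (k+1) : ℤ) := Int.emod_lt_of_pos b hnpos
    set d : ℤ := b / (n (k+1) : ℤ) with hd
    have hbqc : b - c = (n (k+1) : ℤ) * d := by
      have := Int.mul_ediv_add_emod b (n (k+1) : ℤ)
      rw [← hd, ← hc] at this
      linarith
    have hvw : (v (k+1) : ℤ) = ((v (k+1) / e (k+1) : ℕ) : ℤ) * (e (k+1) : ℤ) := by
      have : v (k+1) / e (k+1) * e (k+1) = v (k+1) :=
        Nat.div_mul_cancel (by rw [he (k+1) (by omega) hk]; exact Nat.gcd_dvd_right _ _)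
      exact_mod_cast this.symm
    have hne : (e k : ℤ) = (n (k+1) : ℤ) * (e (k+1) : ℤ) := by
      have := n_mul_e he hn (k+1) (by omega) hk
      exact_mod_cast (by simpa using this.symm)
    have hdvd2 : (e k : ℤ) ∣ r - c * (v (k+1) : ℤ) := by
      have heq : r - c * (v (k+1) : ℤ)
          = (e k : ℤ) * ((q * A) + d * ((v (k+1) / e (k+1) : ℕ) : ℤ)) := by
        calc r - c * (v (k+1) : ℤ)
            = (q * A) * (e k : ℤ) + (b - c) * (v (k+1) : ℤ) := by rw [hrab]; ring
          _ = (q * A) * (e k : ℤ) + ((n (k+1) : ℤ) * d) * (((v (k+1) / e (k+1) : ℕ) : ℤ) * (e (k+1) : ℤ)) := by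
              rw [← hvw, hbqc]
          _ = (e k : ℤ) * ((q * A) + d * ((v (k+1) / e (k+1) : ℕ) : ℤ)) := by
              rw [hne]; ring
      exact ⟨_, heq⟩
    obtain ⟨c0, c', hbox, heq⟩ := ih (by omega) _ hdvd2
    refine ⟨c0, fun i => if i = k+1 then c.toNat else c' i, ?_, ?_⟩
    · intro i h1 h2
      by_cases hi : i = k+1
      · subst hi
        simp only [reduceIte]
        omega
      · have hne2 : ((if i = k + 1 then c.toNat else c' i : ℕ)) = c' i := if_neg hi
        simp only [hne2]
        exact hbox i h1 (by omega)
    · rw [Finset.sum_Icc_succ_top (by omega : 1 ≤ k + 1)]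
      have hrw : ∑ i ∈ Finset.Icc 1 k, ((if i = k+1 then c.toNat else c' i : ℕ) : ℤ) * (v i : ℤ)
          = ∑ i ∈ Finset.Icc 1 k, (c' i : ℤ) * (v i : ℤ) := by
        refine Finset.sum_congr rfl fun i hi => ?_
        have : i ≠ k+1 := by have := (Finset.mem_Icc.mp hi).2; omega
        rw [if_neg this]
      rw [hrw]
      simp only [reduceIte]
      rw [Int.toNat_of_nonneg hc0]
      linarith [heq]

end Aux3

section Aux4
variable {g : ℕ} {v e n : ℕ → ℕ}

lemma inGamma_add {k : ℕ} {a b : ℤ} (ha : InGamma k v a) (hb : InGamma k v b) :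
    InGamma k v (a + b) := by
  obtain ⟨c, rfl⟩ := ha
  obtain ⟨d, rfl⟩ := hb
  refine ⟨fun i => c i + d i, ?_⟩
  rw [← Finset.sum_add_distrib]
  refine Finset.sum_congr rfl fun i _ => ?_
  push_cast; ring

lemma inGamma_nsmul {k : ℕ} {a : ℤ} (q : ℕ) (ha : InGamma k v a) :
    InGamma k v ((q : ℤ) * a) := by
  obtain ⟨c, rfl⟩ := ha
  exact ⟨fun i => q * c i, by rw [Finset.mul_sum]; push_cast; ring_nf⟩

lemma keyC (hn1 : ∀ i, 1 ≤ i → i ≤ g → 1 < n i)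
    (hmem : ∀ i, 1 ≤ i → i ≤ g → InGamma (i - 1) v ((n i : ℤ) * (v i : ℤ))) :
    ∀ k, k ≤ g → ∀ r : ℤ, InGamma k v r → ∃ c : ℕ → ℕ,
      (∀ i, 1 ≤ i → i ≤ k → c i < n i) ∧
      r = ∑ i ∈ Finset.range (k + 1), (c i : ℤ) * (v i : ℤ) := by
  intro k
  induction k with
  | zero =>
    rintro _ r ⟨c, hc⟩
    exact ⟨c, by omega, hc⟩
  | succ k ih =>
    rintro hk r ⟨d, hd⟩
    have hsplit : r = (∑ i ∈ Finset.range (k+1), (d i : ℤ) * (v i : ℤ)) + (d (k+1) : ℤ) * (v (k+1) : ℤ) := by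
      rw [hd, Finset.sum_range_succ]
    set q := d (k+1) / n (k+1) with hq
    set c := d (k+1) % n (k+1) with hc
    have hnpos : 0 < n (k+1) := by have := hn1 (k+1) (by omega) hk; omega
    have hcn : c < n (k+1) := Nat.mod_lt _ hnpos
    have hdk : d (k+1) = q * n (k+1) + c := by
      rw [hq, hc]
      have := Nat.div_add_mod (d (k+1)) (n (k+1))
      rw [Nat.mul_comm] at this
      omega
    have hmem' : InGamma k v ((n (k+1) : ℤ) * (v (k+1) : ℤ)) := by
      have := hmem (k+1) (by omega) hk
      simpa using this
    have hin : InGamma k v ((∑ i ∈ Finset.range (k+1), (d i : ℤ) * (v i : ℤ))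
        + (q : ℤ) * ((n (k+1) : ℤ) * (v (k+1) : ℤ))) :=
      inGamma_add ⟨d, rfl⟩ (inGamma_nsmul q hmem')
    obtain ⟨c', hbox, heq⟩ := ih (by omega) _ hin
    refine ⟨fun i => if i = k+1 then c else c' i, ?_, ?_⟩
    · intro i h1 h2
      by_cases hi : i = k+1
      · subst hi; simp only [reduceIte]; exact hcn
      · have : ((if i = k + 1 then c else c' i : ℕ)) = c' i := if_neg hi
        simp only [this]
        exact hbox i h1 (by omega)
    · rw [Finset.sum_range_succ]
      have hrw : ∑ i ∈ Finset.range (k+1), ((if i = k+1 then c else c' i : ℕ) : ℤ) * (v i : ℤ)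
          = ∑ i ∈ Finset.range (k+1), (c' i : ℤ) * (v i : ℤ) := by
        refine Finset.sum_congr rfl fun i hi => ?_
        have : i ≠ k+1 := by have := Finset.mem_range.mp hi; omega
        rw [if_neg this]
      rw [hrw]
      simp only [reduceIte]
      rw [hsplit, hdk, ← heq]
      push_cast
      ring

lemma keyChar (hvpos : ∀ i ≤ g, 0 < v i) (he0 : e 0 = v 0)
    (he : ∀ i, 1 ≤ i → i ≤ g → e i = Nat.gcd (e (i - 1)) (v i))
    (hn : ∀ i, 1 ≤ i → i ≤ g → n i = e (i - 1) / e i)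
    (hn1 : ∀ i, 1 ≤ i → i ≤ g → 1 < n i)
    (hmem : ∀ i, 1 ≤ i → i ≤ g → InGamma (i - 1) v ((n i : ℤ) * (v i : ℤ)))
    (r c0 : ℤ) (c : ℕ → ℕ) (hbox : ∀ i, 1 ≤ i → i ≤ g → c i < n i)
    (hr : r = c0 * (v 0 : ℤ) + ∑ i ∈ Finset.Icc 1 g, (c i : ℤ) * (v i : ℤ)) :
    InGamma g v r ↔ 0 ≤ c0 := by
  constructor
  · intro h
    obtain ⟨d, hdbox, hd⟩ := keyC hn1 hmem g le_rfl r h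
    rw [range_split] at hd
    have hdvd : (v 0 : ℤ) ∣ ∑ i ∈ Finset.Icc 1 g, ((c i : ℤ) - (d i : ℤ)) * (v i : ℤ) := by
      refine ⟨(d 0 : ℤ) - c0, ?_⟩
      have hsub : ∑ i ∈ Finset.Icc 1 g, ((c i : ℤ) - (d i : ℤ)) * (v i : ℤ)
          = (∑ i ∈ Finset.Icc 1 g, (c i : ℤ) * (v i : ℤ))
            - ∑ i ∈ Finset.Icc 1 g, (d i : ℤ) * (v i : ℤ) := by
        rw [← Finset.sum_sub_distrib]
        exact Finset.sum_congr rfl fun i _ => by ring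
      rw [hsub]
      linarith [hr, hd]
    have hzero := keyB hvpos he0 he hn g le_rfl _ (fun i h1 h2 => by
      have h3 := hbox i h1 h2
      have h4 := hdbox i h1 h2
      rw [abs_lt]
      constructor <;> push_cast <;> omega) hdvd
    have hsums : ∑ i ∈ Finset.Icc 1 g, (c i : ℤ) * (v i : ℤ)
        = ∑ i ∈ Finset.Icc 1 g, (d i : ℤ) * (v i : ℤ) := by
      refine Finset.sum_congr rfl fun i hi => ?_
      obtain ⟨h1, h2⟩ := Finset.mem_Icc.mp hi
      have := hzero i h1 h2
      have : (c i : ℤ) = (d i : ℤ) := by linarith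
      rw [this]
    have hv0 : (0 : ℤ) < (v 0 : ℤ) := by exact_mod_cast hvpos 0 (Nat.zero_le g)
    have : c0 * (v 0 : ℤ) = (d 0 : ℤ) * (v 0 : ℤ) := by
      rw [hr, hsums] at hd; linarith
    have hc0d : c0 = (d 0 : ℤ) := by
      exact mul_right_cancel₀ (ne_of_gt hv0) this
    rw [hc0d]; positivity
  · intro h
    refine ⟨fun i => if i = 0 then c0.toNat else c i, ?_⟩
    rw [range_split g (fun i => ((if i = 0 then c0.toNat else c i : ℕ) : ℤ) * (v i : ℤ))]
    simp only [reduceIte]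
    have hrw : ∑ i ∈ Finset.Icc 1 g, ((if i = 0 then c0.toNat else c i : ℕ) : ℤ) * (v i : ℤ)
        = ∑ i ∈ Finset.Icc 1 g, (c i : ℤ) * (v i : ℤ) := by
      refine Finset.sum_congr rfl fun i hi => ?_
      have : i ≠ 0 := by have := (Finset.mem_Icc.mp hi).1; omega
      rw [if_neg this]
    rw [hrw, Int.toNat_of_nonneg h]
    exact hr

end Aux4

/-- A strongly increasing numerical semigroup `Γ = ⟨v_0, …, v_g⟩` with conductor
`μ = ∑ (n_i − 1) v_i − v_0 + 1` is symmetric: `r ∈ Γ ↔ μ − 1 − r ∉ Γ`;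
consequently the number of gaps is `μ / 2`. -/
theorem gamma_symmetric (g : ℕ) (v e n : ℕ → ℕ)
    (hvpos : ∀ i ≤ g, 0 < v i)
    (he0 : e 0 = v 0)
    (he : ∀ i, 1 ≤ i → i ≤ g → e i = Nat.gcd (e (i - 1)) (v i))
    (heg : e g = 1)
    (hn : ∀ i, 1 ≤ i → i ≤ g → n i = e (i - 1) / e i)
    (hn1 : ∀ i, 1 ≤ i → i ≤ g → 1 < n i)
    (hn0 : n 0 = 1)
    (hinc : ∀ i < g, n i * v i < v (i + 1))
    (hmem : ∀ i, 1 ≤ i → i ≤ g → InGamma (i - 1) v ((n i : ℤ) * (v i : ℤ)))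
    (μ : ℤ)
    (hμ : μ = (∑ i ∈ Finset.Icc 1 g, ((n i : ℤ) - 1) * (v i : ℤ)) - (v 0 : ℤ) + 1) :
    (∀ r : ℤ, InGamma g v r ↔ ¬ InGamma g v (μ - 1 - r)) ∧
    2 * ({m : ℕ | ¬ InGamma g v (m : ℤ)}.ncard : ℤ) = μ := by
  classical
  have hsym : ∀ r : ℤ, InGamma g v r ↔ ¬ InGamma g v (μ - 1 - r) := by
    intro r
    obtain ⟨c0, c, hbox, hr⟩ := keyA hvpos he0 he hn hn1 g le_rfl r (by rw [heg]; simp)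
    have h1 := keyChar hvpos he0 he hn hn1 hmem r c0 c hbox hr
    have hbox2 : ∀ i, 1 ≤ i → i ≤ g → n i - 1 - c i < n i := fun i a b => by
      have := hn1 i a b; omega
    have hr2 : μ - 1 - r = (-c0 - 1) * (v 0 : ℤ)
        + ∑ i ∈ Finset.Icc 1 g, ((n i - 1 - c i : ℕ) : ℤ) * (v i : ℤ) := by
      rw [hμ, hr]
      have hco : ∀ i ∈ Finset.Icc 1 g, ((n i - 1 - c i : ℕ) : ℤ) * (v i : ℤ)
          = ((n i : ℤ) - 1) * (v i : ℤ) - (c i : ℤ) * (v i : ℤ) := by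
        intro i hi
        obtain ⟨a, b⟩ := Finset.mem_Icc.mp hi
        have h' := hn1 i a b
        have h'' := hbox i a b
        have hcast : ((n i - 1 - c i : ℕ) : ℤ) = (n i : ℤ) - 1 - (c i : ℤ) := by omega
        rw [hcast]; ring
      rw [Finset.sum_congr rfl hco, Finset.sum_sub_distrib]
      ring
    have h2 := keyChar hvpos he0 he hn hn1 hmem _ (-c0 - 1) _ hbox2 hr2
    rw [h1, h2]
    omega
  have hnonneg : ∀ r : ℤ, InGamma g v r → 0 ≤ r := by
    rintro r ⟨c, rfl⟩
    positivity
  have hμ0 : 0 ≤ μ := by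
    have h := hsym (-1)
    have hne : ¬ InGamma g v (-1) := fun h' => by have := hnonneg _ h'; omega
    have hin : InGamma g v (μ - 1 - (-1)) := by
      by_contra hcon
      exact hne (h.mpr hcon)
    have := hnonneg _ hin
    omega
  refine ⟨hsym, ?_⟩
  set N := μ.toNat with hNdef
  have hN : (N : ℤ) = μ := Int.toNat_of_nonneg hμ0
  set A := (Finset.range N).filter (fun m : ℕ => ¬ InGamma g v (m : ℤ)) with hA
  set B := (Finset.range N).filter (fun m : ℕ => InGamma g v (m : ℤ)) with hB
  have hgapbound : ∀ m : ℕ, ¬ InGamma g v (m : ℤ) → m < N := by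
    intro m hm
    have h := hsym (m : ℤ)
    have hin : InGamma g v (μ - 1 - m) := by
      by_contra hcon
      exact hm (h.mpr hcon)
    have := hnonneg _ hin
    omega
  have hset : {m : ℕ | ¬ InGamma g v (m : ℤ)} = ↑A := by
    ext m
    constructor
    · intro hm
      exact Finset.mem_coe.mpr (Finset.mem_filter.mpr
        ⟨Finset.mem_range.mpr (hgapbound m hm), hm⟩)
    · intro hm
      exact (Finset.mem_filter.mp (Finset.mem_coe.mp hm)).2
  rw [hset, Set.ncard_coe_finset]
  have hcards : A.card = B.card := by
    refine Finset.card_bij (fun m _ => N - 1 - m) ?_ ?_ ?_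
    · intro m hm
      obtain ⟨hmN, hmg⟩ := Finset.mem_filter.mp hm
      have hmN := Finset.mem_range.mp hmN
      show N - 1 - m ∈ B
      refine Finset.mem_filter.mpr ⟨Finset.mem_range.mpr (by omega), ?_⟩
      have hcast : ((N - 1 - m : ℕ) : ℤ) = μ - 1 - m := by omega
      rw [hcast]
      by_contra hcon
      exact hmg ((hsym m).mpr hcon)
    · intro m1 h1 m2 h2 heq'
      have hb1 := Finset.mem_range.mp (Finset.mem_filter.mp h1).1
      have hb2 := Finset.mem_range.mp (Finset.mem_filter.mp h2).1
      have heq'' : N - 1 - m1 = N - 1 - m2 := heq'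
      omega
    · intro k hk
      obtain ⟨hkN, hkg⟩ := Finset.mem_filter.mp hk
      have hkN := Finset.mem_range.mp hkN
      have hmem2 : N - 1 - k ∈ A := by
        refine Finset.mem_filter.mpr ⟨Finset.mem_range.mpr (by omega), ?_⟩
        have hcast : ((N - 1 - k : ℕ) : ℤ) = μ - 1 - k := by omega
        rw [hcast]
        exact (hsym k).mp hkg
      exact ⟨N - 1 - k, hmem2, by show N - 1 - (N - 1 - k) = k; omega⟩
  have hsplit : B.card + A.card = N := by
    rw [hA, hB]
    rw [Finset.card_filter_add_card_filter_not (p := fun m : ℕ => InGamma g v (m : ℤ))]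
    exact Finset.card_range N
  omega
end
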